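/- Let π₁, π₂: R ⇉ X be the projection 𝒯-functors of an equivalence relation R ⊆ X×X on the underlying set of X, where R and X are L-separated cocomplete 𝒯-categories and π₁, π₂ are left adjoint 𝒯-functors, and let q: X → Q be the quotient of the underlying equivalence relation in Set, equipped with the 𝒯-category structure c = q·a·Tq° (the coequalizer of π₁, π₂ in Cat 𝒯). Then the diagram π̂₁, π̂₂: R̂ ⇉ X̂, q̂: X̂ → Q̂ is a split fork in Cat_sep 𝒯, split by q^{-1}: Q̂ → X̂ and π₁^{-1}: X̂ → R̂; that is, q̂·q^{-1} = 1_{Q̂}, π̂₁·π₁^{-1} = 1_{X̂}, and q^{-1}·q̂ = π̂₂·π₁^{-1}. -/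
import Mathlib


universe u

namespace Paper

/-- A strict topological theory `𝒯 = (𝕋, V, ξ)`: a commutative unital quantale `V`
(a complete lattice with a commutative monoid structure whose multiplication preserves
suprema in each variable, with `⊥ < k`), a `Set`-monad `𝕋 = (T, e, m)` such that `T`
sends pullbacks to weak pullbacks and the naturality squares of `m` are weak pullbacks,
and a `𝕋`-algebra structure `ξ : T V → V` for which `⊗` and `k` are `𝕋`-algebra
homomorphisms and `ξ_X := ξ ∘ T(-)` is a (monotone) natural transformation
`P_V → P_V T`. -/
structure TopTheory (V : Type u) [CompleteLattice V] (T : Type u → Type u) where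
  tens : V → V → V
  unit : V
  tens_comm : ∀ u v : V, tens u v = tens v u
  tens_assoc : ∀ u v w : V, tens (tens u v) w = tens u (tens v w)
  unit_tens : ∀ v : V, tens unit v = v
  tens_sSup : ∀ (u : V) (S : Set V), tens u (sSup S) = ⨆ v ∈ S, tens u v
  bot_lt_unit : (⊥ : V) < unit
  map : ∀ {X Y : Type u}, (X → Y) → T X → T Y
  map_id : ∀ {X : Type u}, map (id : X → X) = id
  map_comp : ∀ {X Y Z : Type u} (g : Y → Z) (f : X → Y) (𝔵 : T X),
    map (g ∘ f) 𝔵 = map g (map f 𝔵)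
  e : ∀ {X : Type u}, X → T X
  m : ∀ {X : Type u}, T (T X) → T X
  e_nat : ∀ {X Y : Type u} (f : X → Y) (x : X), map f (e x) = e (f x)
  m_nat : ∀ {X Y : Type u} (f : X → Y) (𝔛 : T (T X)), map f (m 𝔛) = m (map (map f) 𝔛)
  m_e : ∀ {X : Type u} (𝔵 : T X), m (e 𝔵) = 𝔵
  m_map_e : ∀ {X : Type u} (𝔵 : T X), m (map e 𝔵) = 𝔵
  m_assoc : ∀ {X : Type u} (𝔜 : T (T (T X))), m (m 𝔜) = m (map m 𝔜)
  /-- (BC): `T` sends pullbacks to weak pullbacks. -/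
  map_bc : ∀ {X Y Z : Type u} (f : X → Z) (g : Y → Z) (𝔵 : T X) (𝔶 : T Y),
    map f 𝔵 = map g 𝔶 →
    ∃ 𝔴 : T {p : X × Y // f p.1 = g p.2},
      map (fun p => p.1.1) 𝔴 = 𝔵 ∧ map (fun p => p.1.2) 𝔴 = 𝔶
  /-- (BC): every naturality square of `m` is a weak pullback. -/
  m_bc : ∀ {X Y : Type u} (f : X → Y) (𝔜 : T (T Y)) (𝔵 : T X),
    m 𝔜 = map f 𝔵 → ∃ 𝔛 : T (T X), map (map f) 𝔛 = 𝔜 ∧ m 𝔛 = 𝔵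
  xi : T V → V
  xi_e : ∀ v : V, xi (e v) = v
  xi_m : ∀ 𝔙 : T (T V), xi (m 𝔙) = xi (map xi 𝔙)
  /-- `k : 1 → V` is a `𝕋`-algebra homomorphism. -/
  xi_unit : ∀ {X : Type u} (𝔵 : T X), xi (map (fun _ => unit) 𝔵) = unit
  /-- `⊗ : V × V → V` is a `𝕋`-algebra homomorphism. -/
  xi_tens : ∀ 𝔴 : T (V × V),
    xi (map (fun p => tens p.1 p.2) 𝔴) = tens (xi (map Prod.fst 𝔴)) (xi (map Prod.snd 𝔴))
  /-- each component `ξ_X : V^X → V^{T X}` is monotone. -/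
  xi_mono : ∀ {X : Type u} (φ φ' : X → V), (∀ x, φ x ≤ φ' x) →
    ∀ 𝔵 : T X, xi (map φ 𝔵) ≤ xi (map φ' 𝔵)
  /-- `ξ_X` is a natural transformation `P_V → P_V T`. -/
  xi_nat : ∀ {X Y : Type u} (f : X → Y) (φ : X → V) (𝔶 : T Y),
    (⨆ 𝔵 : {𝔵 : T X // map f 𝔵 = 𝔶}, xi (map φ 𝔵.1)) =
      xi (map (fun y => ⨆ x : {x : X // f x = y}, φ x.1) 𝔶)

namespace TopTheory

variable {V : Type u} [CompleteLattice V] {T : Type u → Type u}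

/-- The internal hom of the quantale: `u ⊗ (-) ⊣ hom (u, -)`. -/
def ihom (𝒯 : TopTheory V T) (u w : V) : V := sSup {z | 𝒯.tens u z ≤ w}

/-- The extension `T_ξ` of `T : Set → Set` to `V`-relations. -/
def Txi (𝒯 : TopTheory V T) {X Y : Type u} (r : X → Y → V) (𝔵 : T X) (𝔶 : T Y) : V :=
  ⨆ 𝔴 : {w : T (X × Y) // 𝒯.map Prod.fst w = 𝔵 ∧ 𝒯.map Prod.snd w = 𝔶},
    𝒯.xi (𝒯.map (fun p => r p.1 p.2) 𝔴.1)

/-- Kleisli convolution `β ∘ α = β · T_ξ α · m_X°` of `𝒯`-relations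
`α : X ⇸ Y` and `β : Y ⇸ Z`. -/
def kleisli (𝒯 : TopTheory V T) {X Y Z : Type u}
    (β : T Y → Z → V) (α : T X → Y → V) (𝔵 : T X) (z : Z) : V :=
  ⨆ 𝔛 : {𝔛 : T (T X) // 𝒯.m 𝔛 = 𝔵}, ⨆ 𝔶 : T Y, 𝒯.tens (𝒯.Txi α 𝔛.1 𝔶) (β 𝔶 z)

/-- The `𝒯`-relation `e_X° : X ⇸ X`. -/
def unitRel (𝒯 : TopTheory V T) (X : Type u) (𝔵 : T X) (x : X) : V :=
  ⨆ _ : 𝔵 = 𝒯.e x, 𝒯.unit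

/-- A `𝒯`-category structure on `X`: a `𝒯`-relation `a : X ⇸ X` with
`e_X° ≤ a` and `a ∘ a ≤ a`. -/
structure TCatStr (𝒯 : TopTheory V T) (X : Type u) where
  rel : T X → X → V
  le_refl : ∀ x : X, 𝒯.unit ≤ rel (𝒯.e x) x
  comp : ∀ (𝔵 : T X) (x : X), 𝒯.kleisli rel rel 𝔵 x ≤ rel 𝔵 x

/-- The `𝒯`-module conditions `φ ∘ a ≤ φ` and `b ∘ φ ≤ φ` for a `𝒯`-relation
`φ : X ⇸ Y` between (structures underlying) `𝒯`-categories `(X,a)` and `(Y,b)`. -/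
def IsTModRel (𝒯 : TopTheory V T) {X Y : Type u}
    (a : T X → X → V) (b : T Y → Y → V) (φ : T X → Y → V) : Prop :=
  (∀ 𝔵 y, 𝒯.kleisli φ a 𝔵 y ≤ φ 𝔵 y) ∧ (∀ 𝔵 y, 𝒯.kleisli b φ 𝔵 y ≤ φ 𝔵 y)

variable {𝒯 : TopTheory V T}

/-- `f_* = b · T f`. -/
def modStar {X Y : Type u} (b : 𝒯.TCatStr Y) (f : X → Y) (𝔵 : T X) (y : Y) : V :=
  b.rel (𝒯.map f 𝔵) y

/-- `f^* = f° · b`. -/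
def modCostar {X Y : Type u} (b : 𝒯.TCatStr Y) (f : X → Y) (𝔶 : T Y) (x : X) : V :=
  b.rel 𝔶 (f x)

/-- The extension `φ ⟜ ψ` of `φ : X ⇸∘ Y` along `ψ : X ⇸∘ Z`, given by
`(φ ⟜ ψ)(𝔷,y) = ⋀_{𝔵 ∈ T X} hom((T_ξ ψ · m_X°)(𝔵,𝔷), φ(𝔵,y))`. -/
def extend (𝒯 : TopTheory V T) {X Y Z : Type u}
    (φ : T X → Y → V) (ψ : T X → Z → V) (𝔷 : T Z) (y : Y) : V :=
  ⨅ 𝔵 : T X, 𝒯.ihom (⨆ 𝔛 : {𝔛 : T (T X) // 𝒯.m 𝔛 = 𝔵}, 𝒯.Txi ψ 𝔛.1 𝔷) (φ 𝔵 y)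

/-- A `𝒯`-functor `f : (X,a) → (Y,b)`. -/
def IsTFunctor {X Y : Type u} (a : 𝒯.TCatStr X) (b : 𝒯.TCatStr Y) (f : X → Y) : Prop :=
  ∀ (𝔵 : T X) (x : X), a.rel 𝔵 x ≤ b.rel (𝒯.map f 𝔵) (f x)

/-- A fully faithful `𝒯`-functor. -/
def FullyFaithful {X Y : Type u} (a : 𝒯.TCatStr X) (b : 𝒯.TCatStr Y) (f : X → Y) : Prop :=
  ∀ (𝔵 : T X) (x : X), a.rel 𝔵 x = b.rel (𝒯.map f 𝔵) (f x)

/-- The order `f ≤ g ⟺ f^* ≤ g^*` on `𝒯`-functors `X → (Y,b)`. -/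
def funLE {X Y : Type u} (b : 𝒯.TCatStr Y) (f g : X → Y) : Prop :=
  ∀ (𝔶 : T Y) (x : X), b.rel 𝔶 (f x) ≤ b.rel 𝔶 (g x)

/-- Equivalence `f ≅ g ⟺ f^* = g^*` of `𝒯`-functors `X → (Y,b)`. -/
def FunEquiv {X Y : Type u} (b : 𝒯.TCatStr Y) (f g : X → Y) : Prop :=
  ∀ (𝔶 : T Y) (x : X), b.rel 𝔶 (f x) = b.rel 𝔶 (g x)

/-- `f ⊣ g`:  `1_X ≤ g·f` and `f·g ≤ 1_Y`. -/
def IsAdjunction {X Y : Type u} (a : 𝒯.TCatStr X) (b : 𝒯.TCatStr Y)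
    (f : X → Y) (g : Y → X) : Prop :=
  (∀ (𝔵 : T X) (x : X), a.rel 𝔵 x ≤ a.rel 𝔵 (g (f x))) ∧
    (∀ (𝔶 : T Y) (y : Y), b.rel 𝔶 (f (g y)) ≤ b.rel 𝔶 y)

/-- A left adjoint `𝒯`-functor. -/
def IsLeftAdjoint {X Y : Type u} (a : 𝒯.TCatStr X) (b : 𝒯.TCatStr Y) (f : X → Y) : Prop :=
  IsTFunctor a b f ∧ ∃ g : Y → X, IsTFunctor b a g ∧ IsAdjunction a b f g

/-- L-separatedness: equivalent `𝒯`-functors into `X` are equal. -/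
def Separated {X : Type u} (a : 𝒯.TCatStr X) : Prop :=
  ∀ (A : Type u) (as : 𝒯.TCatStr A) (f g : A → X),
    IsTFunctor as a f → IsTFunctor as a g → FunEquiv a f g → f = g

/-- Injectivity with respect to fully faithful `𝒯`-functors. -/
def Injective {X : Type u} (a : 𝒯.TCatStr X) : Prop :=
  ∀ (A B : Type u) (as : 𝒯.TCatStr A) (bs : 𝒯.TCatStr B) (f : A → X) (i : A → B),
    IsTFunctor as a f → IsTFunctor as bs i → FullyFaithful as bs i →
      ∃ g : B → X, IsTFunctor bs a g ∧ FunEquiv a (g ∘ i) f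

/-- `g : Z → X` is the `ψ`-weighted colimit of `h : A → X`, i.e. `g_* = h_* ⟜ ψ`. -/
def IsColimit {X A Z : Type u} (a : 𝒯.TCatStr X) (h : A → X) (ψ : T A → Z → V)
    (g : Z → X) : Prop :=
  ∀ (𝔷 : T Z) (x : X), modStar a g 𝔷 x = 𝒯.extend (modStar a h) ψ 𝔷 x

/-- Cocompleteness: every weighted diagram has a colimit. -/
def Cocomplete {X : Type u} (a : 𝒯.TCatStr X) : Prop :=
  ∀ (A Z : Type u) (as : 𝒯.TCatStr A) (cs : 𝒯.TCatStr Z) (h : A → X),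
    IsTFunctor as a h → ∀ ψ : T A → Z → V, 𝒯.IsTModRel as.rel cs.rel ψ →
      ∃ g : Z → X, IsTFunctor cs a g ∧ IsColimit a h ψ g

/-- Cocontinuity: preservation of all weighted colimits. -/
def Cocontinuous {X Y : Type u} (a : 𝒯.TCatStr X) (b : 𝒯.TCatStr Y) (f : X → Y) : Prop :=
  ∀ (A Z : Type u) (as : 𝒯.TCatStr A) (cs : 𝒯.TCatStr Z) (h : A → X)
    (ψ : T A → Z → V) (g : Z → X),
    IsTFunctor as a h → 𝒯.IsTModRel as.rel cs.rel ψ → IsTFunctor cs a g →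
      IsColimit a h ψ g → IsColimit b (f ∘ h) ψ (f ∘ g)

/-- A presheaf on `(X,a)`: a `𝒯`-module `X ⇸∘ G`, where `G = (1, e_1°)`. -/
def IsPresheaf {X : Type u} (a : 𝒯.TCatStr X) (ψ : T X → V) : Prop :=
  𝒯.IsTModRel a.rel (𝒯.unitRel PUnit) (fun 𝔵 _ => ψ 𝔵)

/-- The underlying set of the presheaf `𝒯`-category `X̂`. -/
def Hat {X : Type u} (a : 𝒯.TCatStr X) : Type u := {ψ : T X → V // IsPresheaf a ψ}

/-- The `𝒯`-category structure `⟦-,-⟧` of `V^{|X|}`. -/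
def powRel (𝒯 : TopTheory V T) (X : Type u) (𝔭 : T (T X → V)) (ψ : T X → V) : V :=
  ⨅ 𝔮 : {q : T ((T X) × (T X → V)) // 𝒯.map Prod.snd q = 𝔭},
    𝒯.ihom (𝒯.xi (𝒯.map (fun p => p.2 p.1) 𝔮.1)) (ψ (𝒯.m (𝒯.map Prod.fst 𝔮.1)))

/-- `hs` is the `𝒯`-category structure on `X̂` inherited from `V^{|X|}`. -/
def IsHatStr {X : Type u} (a : 𝒯.TCatStr X) (hs : 𝒯.TCatStr (Hat a)) : Prop :=
  ∀ (𝔭 : T (Hat a)) (ψ : Hat a), hs.rel 𝔭 ψ = 𝒯.powRel X (𝒯.map Subtype.val 𝔭) ψ.1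

/-- `y` is the Yoneda functor `X → X̂`, `y x = a(-,x)`. -/
def IsYoneda {X : Type u} (a : 𝒯.TCatStr X) (y : X → Hat a) : Prop :=
  ∀ (x : X) (𝔵 : T X), (y x).1 𝔵 = a.rel 𝔵 x

/-- The underlying map `ψ ↦ ψ ∘ f^*` of `f̂ : X̂ → Ŷ`. -/
def hatMapRel {X Y : Type u} (b : 𝒯.TCatStr Y) (f : X → Y) (ψ : T X → V) (𝔶 : T Y) : V :=
  𝒯.kleisli (fun 𝔵 (_ : PUnit.{u + 1}) => ψ 𝔵) (modCostar b f) 𝔶 PUnit.unit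

/-- `fh` is the `𝒯`-functor `f̂ : X̂ → Ŷ`, with underlying map `ψ ↦ ψ ∘ f^*`. -/
def IsHatMap {X Y : Type u} (a : 𝒯.TCatStr X) (b : 𝒯.TCatStr Y) (f : X → Y)
    (fh : Hat a → Hat b) : Prop :=
  ∀ (ψ : Hat a) (𝔶 : T Y), (fh ψ).1 𝔶 = hatMapRel b f ψ.1 𝔶

/-- An inhabited `𝒯`-module: `k ≤ ⋀_y ⋁_𝔵 φ(𝔵,y)`. -/
def InhabitedMod (𝒯 : TopTheory V T) {X Y : Type u} (φ : T X → Y → V) : Prop :=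
  𝒯.unit ≤ ⨅ y : Y, ⨆ 𝔵 : T X, φ 𝔵 y

/-- A dense `𝒯`-functor: `f_*` is inhabited. -/
def Dense {X Y : Type u} (b : 𝒯.TCatStr Y) (f : X → Y) : Prop :=
  𝒯.InhabitedMod (modStar b f)

/-- The underlying set of `X⁺ = {ψ ∈ X̂ ∣ ψ inhabited}`. -/
def Plus {X : Type u} (a : 𝒯.TCatStr X) : Type u :=
  {ψ : Hat a // 𝒯.InhabitedMod (fun 𝔵 (_ : PUnit.{u + 1}) => ψ.1 𝔵)}

/-- `ps` is the `𝒯`-category structure on `X⁺` inherited from `X̂`. -/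
def IsPlusStr {X : Type u} (a : 𝒯.TCatStr X) (hs : 𝒯.TCatStr (Hat a))
    (ps : 𝒯.TCatStr (Plus a)) : Prop :=
  ∀ (𝔭 : T (Plus a)) (ψ : Plus a), ps.rel 𝔭 ψ = hs.rel (𝒯.map Subtype.val 𝔭) ψ.1

/-- Inhabited-cocompleteness: all colimits with inhabited weights exist. -/
def ICocomplete {X : Type u} (a : 𝒯.TCatStr X) : Prop :=
  ∀ (A Z : Type u) (as : 𝒯.TCatStr A) (cs : 𝒯.TCatStr Z) (h : A → X),
    IsTFunctor as a h → ∀ ψ : T A → Z → V, 𝒯.IsTModRel as.rel cs.rel ψ →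
      𝒯.InhabitedMod ψ → ∃ g : Z → X, IsTFunctor cs a g ∧ IsColimit a h ψ g

/-- Inhabited-cocontinuity: preservation of all colimits with inhabited weights. -/
def ICocontinuous {X Y : Type u} (a : 𝒯.TCatStr X) (b : 𝒯.TCatStr Y) (f : X → Y) : Prop :=
  ∀ (A Z : Type u) (as : 𝒯.TCatStr A) (cs : 𝒯.TCatStr Z) (h : A → X)
    (ψ : T A → Z → V) (g : Z → X),
    IsTFunctor as a h → 𝒯.IsTModRel as.rel cs.rel ψ → 𝒯.InhabitedMod ψ →
      IsTFunctor cs a g → IsColimit a h ψ g → IsColimit b (f ∘ h) ψ (f ∘ g)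


/-! ### Auxiliary lemmas for Statement 18 -/

section Aux

variable (𝒯 : TopTheory V T)

lemma aux_tens_mono_right (u : V) {v w : V} (h : v ≤ w) : 𝒯.tens u v ≤ 𝒯.tens u w := by
  have h2 : 𝒯.tens u (sSup {v, w}) = ⨆ x ∈ ({v, w} : Set V), 𝒯.tens u x := 𝒯.tens_sSup u _
  have h3 : sSup ({v, w} : Set V) = w := by rw [sSup_pair, sup_eq_right.mpr h]
  rw [h3] at h2
  rw [h2]
  exact le_biSup _ (by simp)

lemma aux_tens_mono_left {u v : V} (h : u ≤ v) (w : V) : 𝒯.tens u w ≤ 𝒯.tens v w := by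
  rw [𝒯.tens_comm u w, 𝒯.tens_comm v w]
  exact 𝒯.aux_tens_mono_right w h

lemma aux_tens_iSup_left {ι : Type u} (f : ι → V) (c : V) :
    𝒯.tens (⨆ i, f i) c = ⨆ i, 𝒯.tens (f i) c := by
  rw [𝒯.tens_comm, iSup, 𝒯.tens_sSup, iSup_range]
  exact iSup_congr fun i => 𝒯.tens_comm _ _

lemma aux_map_congr {X Y : Type u} {f g : X → Y} (h : ∀ x, f x = g x) (𝔵 : T X) :
    𝒯.map f 𝔵 = 𝒯.map g 𝔵 := by rw [funext h]

/-- A witness for the extension `T_ξ r`. -/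
lemma aux_le_Txi {X Y : Type u} (r : X → Y → V) {𝔵 : T X} {𝔶 : T Y} {Z : Type u}
    (g : Z → X × Y) (𝔷 : T Z) (h1 : 𝒯.map (fun z => (g z).1) 𝔷 = 𝔵)
    (h2 : 𝒯.map (fun z => (g z).2) 𝔷 = 𝔶) :
    𝒯.xi (𝒯.map (fun z => r (g z).1 (g z).2) 𝔷) ≤ 𝒯.Txi r 𝔵 𝔶 := by
  have hw1 : 𝒯.map Prod.fst (𝒯.map g 𝔷) = 𝔵 := by rw [← 𝒯.map_comp]; exact h1
  have hw2 : 𝒯.map Prod.snd (𝒯.map g 𝔷) = 𝔶 := by rw [← 𝒯.map_comp]; exact h2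
  refine le_iSup_of_le
    (⟨𝒯.map g 𝔷, hw1, hw2⟩ :
      {w : T (X × Y) // 𝒯.map Prod.fst w = 𝔵 ∧ 𝒯.map Prod.snd w = 𝔶})
    (le_of_eq ?_)
  rw [← 𝒯.map_comp]
  rfl

lemma aux_Txi_le {X Y : Type u} (r : X → Y → V) {𝔵 : T X} {𝔶 : T Y} {c : V}
    (h : ∀ 𝔴 : {w : T (X × Y) // 𝒯.map Prod.fst w = 𝔵 ∧ 𝒯.map Prod.snd w = 𝔶},
      𝒯.xi (𝒯.map (fun p => r p.1 p.2) 𝔴.1) ≤ c) : 𝒯.Txi r 𝔵 𝔶 ≤ c :=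
  iSup_le h

lemma aux_kleisli_le {X Y Z : Type u} (β : T Y → Z → V) (α : T X → Y → V)
    {𝔵 : T X} {z : Z} {c : V}
    (h : ∀ (𝔛 : {𝔛 : T (T X) // 𝒯.m 𝔛 = 𝔵}) (𝔶 : T Y),
      𝒯.tens (𝒯.Txi α 𝔛.1 𝔶) (β 𝔶 z) ≤ c) :
    𝒯.kleisli β α 𝔵 z ≤ c :=
  iSup_le fun 𝔛 => iSup_le (h 𝔛)

lemma aux_le_kleisli {X Y Z : Type u} (β : T Y → Z → V) (α : T X → Y → V)
    {𝔵 : T X} {z : Z} (𝔛 : T (T X)) (h𝔛 : 𝒯.m 𝔛 = 𝔵) (𝔶 : T Y) :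
    𝒯.tens (𝒯.Txi α 𝔛 𝔶) (β 𝔶 z) ≤ 𝒯.kleisli β α 𝔵 z :=
  le_iSup_of_le ⟨𝔛, h𝔛⟩ (le_iSup_of_le 𝔶 le_rfl)

/-- If `k ≤ a(e x, y)` then `a(𝔵, x) ≤ a(𝔵, y)`. -/
lemma aux_rel_le_of_unit_le {X : Type u} (a : 𝒯.TCatStr X) {x y : X}
    (h : 𝒯.unit ≤ a.rel (𝒯.e x) y) (𝔵 : T X) : a.rel 𝔵 x ≤ a.rel 𝔵 y := by
  refine le_trans ?_ (a.comp 𝔵 y)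
  refine le_trans ?_ (𝒯.aux_le_kleisli a.rel a.rel (𝒯.e 𝔵) (𝒯.m_e 𝔵) (𝒯.e x))
  have h1 : a.rel 𝔵 x ≤ 𝒯.Txi a.rel (𝒯.e 𝔵) (𝒯.e x) := by
    have hv : 𝒯.xi (𝒯.map (fun z : T X × X => a.rel z.1 z.2) (𝒯.e (𝔵, x))) = a.rel 𝔵 x := by
      rw [𝒯.e_nat, 𝒯.xi_e]
    refine le_trans (le_of_eq hv.symm) (𝒯.aux_le_Txi a.rel id (𝒯.e (𝔵, x)) ?_ ?_)
    · exact 𝒯.e_nat (fun z : T X × X => z.1) (𝔵, x)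
    · exact 𝒯.e_nat (fun z : T X × X => z.2) (𝔵, x)
  calc a.rel 𝔵 x = 𝒯.tens (a.rel 𝔵 x) 𝒯.unit := by rw [𝒯.tens_comm, 𝒯.unit_tens]
    _ ≤ 𝒯.tens (𝒯.Txi a.rel (𝒯.e 𝔵) (𝒯.e x)) (a.rel (𝒯.e x) y) :=
      le_trans (𝒯.aux_tens_mono_right _ h) (𝒯.aux_tens_mono_left h1 _)

/-- If `1 ≤ h` (pointwise, via the unit) then `a(T h 𝔯, z) ≤ a(𝔯, z)`. -/
lemma aux_map_rel_le {X : Type u} (a : 𝒯.TCatStr X) (h : X → X)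
    (hh : ∀ p, 𝒯.unit ≤ a.rel (𝒯.e p) (h p)) (𝔯 : T X) (z : X) :
    a.rel (𝒯.map h 𝔯) z ≤ a.rel 𝔯 z := by
  refine le_trans ?_ (a.comp 𝔯 z)
  refine le_trans ?_ (𝒯.aux_le_kleisli a.rel a.rel (𝒯.map 𝒯.e 𝔯) (𝒯.m_map_e 𝔯) (𝒯.map h 𝔯))
  have h1 : 𝒯.unit ≤ 𝒯.Txi a.rel (𝒯.map 𝒯.e 𝔯) (𝒯.map h 𝔯) := by
    refine le_trans ?_ (𝒯.aux_le_Txi a.rel (fun p => (𝒯.e p, h p)) 𝔯 rfl rfl)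
    calc 𝒯.unit = 𝒯.xi (𝒯.map (fun _ : X => 𝒯.unit) 𝔯) := (𝒯.xi_unit 𝔯).symm
      _ ≤ _ := 𝒯.xi_mono _ _ (fun p => hh p) 𝔯
  calc a.rel (𝒯.map h 𝔯) z = 𝒯.tens 𝒯.unit (a.rel (𝒯.map h 𝔯) z) := (𝒯.unit_tens _).symm
    _ ≤ _ := 𝒯.aux_tens_mono_left h1 _

/-- If `f` has a section `s` then `f̂ (f⁻¹ Ψ) = Ψ` for every presheaf `Ψ`. -/
lemma aux_hatMapRel_section {A Y : Type u} (b : 𝒯.TCatStr Y) (f : A → Y) (s : Y → A)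
    (hs : ∀ y, f (s y) = y) (Ψ : T Y → V) (hΨ : IsPresheaf b Ψ) (𝔶 : T Y) :
    hatMapRel b f (fun 𝔞 => Ψ (𝒯.map f 𝔞)) 𝔶 = Ψ 𝔶 := by
  apply le_antisymm
  · refine 𝒯.aux_kleisli_le _ _ fun 𝔜 𝔞 => ?_
    refine le_trans ?_ (hΨ.1 𝔶 PUnit.unit)
    refine le_trans ?_ (𝒯.aux_le_kleisli (fun 𝔵 (_ : PUnit.{u+1}) => Ψ 𝔵) b.rel 𝔜.1 𝔜.2
      (𝒯.map f 𝔞))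
    refine 𝒯.aux_tens_mono_left ?_ _
    refine 𝒯.aux_Txi_le _ fun 𝔴 => ?_
    refine le_trans (le_of_eq rfl)
      (𝒯.aux_le_Txi b.rel (fun p : T Y × A => (p.1, f p.2)) 𝔴.1 𝔴.2.1 ?_)
    rw [show (fun z : T Y × A => f z.2) = f ∘ Prod.snd from rfl, 𝒯.map_comp, 𝔴.2.2]
  · have hmap : 𝒯.map f (𝒯.map s 𝔶) = 𝔶 := by
      rw [← 𝒯.map_comp, show f ∘ s = id from funext hs, 𝒯.map_id]; rfl
    refine le_trans ?_ (𝒯.aux_le_kleisli (fun 𝔵 (_ : PUnit.{u+1}) => Ψ (𝒯.map f 𝔵))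
      (modCostar b f) (𝒯.map 𝒯.e 𝔶) (𝒯.m_map_e 𝔶) (𝒯.map s 𝔶))
    have h1 : 𝒯.unit ≤ 𝒯.Txi (modCostar b f) (𝒯.map 𝒯.e 𝔶) (𝒯.map s 𝔶) := by
      refine le_trans ?_ (𝒯.aux_le_Txi (modCostar b f) (fun y => (𝒯.e y, s y)) 𝔶 rfl rfl)
      calc 𝒯.unit = 𝒯.xi (𝒯.map (fun _ : Y => 𝒯.unit) 𝔶) := (𝒯.xi_unit 𝔶).symm
        _ ≤ _ := 𝒯.xi_mono _ _ (fun y => by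
          show 𝒯.unit ≤ b.rel (𝒯.e y) (f (s y))
          rw [hs y]; exact b.le_refl y) 𝔶
    calc Ψ 𝔶 = 𝒯.tens 𝒯.unit (Ψ 𝔶) := (𝒯.unit_tens _).symm
      _ ≤ 𝒯.tens (𝒯.Txi (modCostar b f) (𝒯.map 𝒯.e 𝔶) (𝒯.map s 𝔶)) (Ψ (𝒯.map f (𝒯.map s 𝔶))) := by
          rw [hmap]; exact 𝒯.aux_tens_mono_left h1 _

end Aux

/-- split fork, Subsection 4.2. Let `π₁, π₂ : R ⇉ X` be the
projections of an equivalence relation `R ⊆ X × X`, where `R` (with the `𝒯`-structure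
inherited from `X ⊗ X`) and `X` are L-separated cocomplete `𝒯`-categories and
`π₁, π₂` are left adjoint, and let `q : X → Q` be the quotient in `Set` with the
`𝒯`-structure `c = q·a·Tq°`. Then `π̂₁, π̂₂ : R̂ ⇉ X̂`, `q̂ : X̂ → Q̂` is a split fork,
split by `q⁻¹` and `π₁⁻¹`: `q̂·q⁻¹ = 1`, `π̂₁·π₁⁻¹ = 1` and `q⁻¹·q̂ = π̂₂·π₁⁻¹`. -/
theorem statement18 (𝒯 : TopTheory V T) {X : Type u} (a : 𝒯.TCatStr X)
    (r : X → X → Prop) (hr : Equivalence r)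
    (rs : 𝒯.TCatStr {p : X × X // r p.1 p.2})
    (hrs : ∀ (𝔴 : T {p : X × X // r p.1 p.2}) (p : {p : X × X // r p.1 p.2}),
      rs.rel 𝔴 p = 𝒯.tens (a.rel (𝒯.map (fun q => q.1.1) 𝔴) p.1.1)
        (a.rel (𝒯.map (fun q => q.1.2) 𝔴) p.1.2))
    (hXsep : Separated a) (hXcoc : Cocomplete a)
    (hRsep : Separated rs) (hRcoc : Cocomplete rs)
    (hπ₁ : IsLeftAdjoint rs a (fun p => p.1.1))
    (hπ₂ : IsLeftAdjoint rs a (fun p => p.1.2))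
    (qs : 𝒯.TCatStr (Quot r))
    (hqs : ∀ (𝔶 : T (Quot r)) (z : Quot r),
      qs.rel 𝔶 z = ⨆ 𝔵 : {𝔵 : T X // 𝒯.map (Quot.mk r) 𝔵 = 𝔶},
        ⨆ x : {x : X // Quot.mk r x = z}, a.rel 𝔵.1 x.1)
    (hsR : 𝒯.TCatStr (Hat rs)) (hhsR : IsHatStr rs hsR)
    (hsX : 𝒯.TCatStr (Hat a)) (hhsX : IsHatStr a hsX)
    (hsQ : 𝒯.TCatStr (Hat qs)) (hhsQ : IsHatStr qs hsQ)
    (p1h p2h : Hat rs → Hat a)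
    (hp1h : IsHatMap rs a (fun p => p.1.1) p1h)
    (hp2h : IsHatMap rs a (fun p => p.1.2) p2h)
    (qh : Hat a → Hat qs) (hqh : IsHatMap a qs (Quot.mk r) qh)
    (qinv : Hat qs → Hat a)
    (hqinv : ∀ (Ψ : Hat qs) (𝔵 : T X), (qinv Ψ).1 𝔵 = Ψ.1 (𝒯.map (Quot.mk r) 𝔵))
    (p1inv : Hat a → Hat rs)
    (hp1inv : ∀ (Ψ : Hat a) (𝔴 : T {p : X × X // r p.1 p.2}),
      (p1inv Ψ).1 𝔴 = Ψ.1 (𝒯.map (fun q => q.1.1) 𝔴)) :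
    (∀ Ψ : Hat qs, qh (qinv Ψ) = Ψ) ∧
    (∀ Ψ : Hat a, p1h (p1inv Ψ) = Ψ) ∧
    (∀ Ψ : Hat a, qinv (qh Ψ) = p2h (p1inv Ψ)) := by
  classical
  obtain ⟨hπ₁f, g₁, hg₁f, hadj1, hadj2⟩ := hπ₁
  have key : ∀ {x y : X}, Quot.mk r x = Quot.mk r y → r x y :=
    fun h => hr.eqvGen_iff.mp (Quot.eq.mp h)
  -- `π₁ ∘ g₁ = id`, by L-separatedness of `X`.
  have hcomp : IsTFunctor a a (fun x => (g₁ x).1.1) := by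
    intro 𝔵 x
    refine le_trans (hg₁f 𝔵 x) (le_trans (hπ₁f (𝒯.map g₁ 𝔵) (g₁ x)) (le_of_eq ?_))
    rw [← 𝒯.map_comp]; rfl
  have hid : IsTFunctor a a (fun x => x) := by
    intro 𝔵 x
    refine le_of_eq ?_
    rw [show (fun x : X => x) = id from rfl, 𝒯.map_id]; rfl
  have hux : ∀ x : X, 𝒯.unit ≤ a.rel (𝒯.e x) ((g₁ x).1.1) := by
    intro x
    have h1 : 𝒯.unit ≤
        rs.rel (𝒯.e (⟨(x, x), hr.refl x⟩ : {p : X × X // r p.1 p.2})) (g₁ x) :=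
      le_trans (rs.le_refl _) (hadj1 _ ⟨(x, x), hr.refl x⟩)
    refine le_trans h1 (le_trans (hπ₁f _ (g₁ x)) (le_of_eq ?_))
    rw [𝒯.e_nat]
  have hfe : FunEquiv a (fun x => (g₁ x).1.1) (fun x => x) := fun 𝔵 x =>
    le_antisymm (hadj2 𝔵 x) (𝒯.aux_rel_le_of_unit_le a (hux x) 𝔵)
  have hg1x : ∀ x : X, (g₁ x).1.1 = x := fun x =>
    congrFun (hXsep X a _ _ hcomp hid hfe) x
  have hrelA : ∀ x : X, r x ((g₁ x).1.2) := by
    intro x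
    have h := (g₁ x).2
    rwa [hg1x x] at h
  -- Lemma A
  have hO3pre : ∀ p : {p : X × X // r p.1 p.2}, 𝒯.unit ≤ rs.rel (𝒯.e p) (g₁ p.1.1) :=
    fun p => le_trans (rs.le_refl p) (hadj1 _ p)
  have lemA : ∀ (𝔯 : T {p : X × X // r p.1 p.2}) (x : X),
      a.rel (𝒯.map (fun p => p.1.1) 𝔯) x ≤
        a.rel (𝒯.map (fun p => p.1.2) 𝔯) ((g₁ x).1.2) := by
    intro 𝔯 x
    calc a.rel (𝒯.map (fun p => p.1.1) 𝔯) x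
        ≤ rs.rel (𝒯.map g₁ (𝒯.map (fun p => p.1.1) 𝔯)) (g₁ x) := hg₁f _ x
      _ = rs.rel (𝒯.map (fun p : {p : X × X // r p.1 p.2} => g₁ p.1.1) 𝔯) (g₁ x) := by
          rw [← 𝒯.map_comp]; rfl
      _ ≤ rs.rel 𝔯 (g₁ x) := 𝒯.aux_map_rel_le rs _ hO3pre 𝔯 _
      _ ≤ a.rel (𝒯.map (fun p => p.1.2) 𝔯) ((g₁ x).1.2) := hπ₂.1 𝔯 (g₁ x)
  -- Lemma B
  have lemB : ∀ (𝔷' 𝔷 : T X), 𝒯.map (Quot.mk r) 𝔷' = 𝒯.map (Quot.mk r) 𝔷 →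
      ∀ x : X, a.rel 𝔷' x ≤ a.rel 𝔷 ((g₁ x).1.2) := by
    intro 𝔷' 𝔷 hq x
    obtain ⟨𝔳, h1, h2⟩ := 𝒯.map_bc (Quot.mk r) (Quot.mk r) 𝔷' 𝔷 hq
    have e1 : 𝒯.map (fun p : {p : X × X // r p.1 p.2} => p.1.1)
        (𝒯.map (fun p : {p : X × X // Quot.mk r p.1 = Quot.mk r p.2} =>
          (⟨p.1, key p.2⟩ : {p : X × X // r p.1 p.2})) 𝔳) = 𝔷' := by
      rw [← 𝒯.map_comp]; exact h1
    have e2 : 𝒯.map (fun p : {p : X × X // r p.1 p.2} => p.1.2)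
        (𝒯.map (fun p : {p : X × X // Quot.mk r p.1 = Quot.mk r p.2} =>
          (⟨p.1, key p.2⟩ : {p : X × X // r p.1 p.2})) 𝔳) = 𝔷 := by
      rw [← 𝒯.map_comp]; exact h2
    have h := lemA (𝒯.map (fun p : {p : X × X // Quot.mk r p.1 = Quot.mk r p.2} =>
      (⟨p.1, key p.2⟩ : {p : X × X // r p.1 p.2})) 𝔳) x
    rwa [e1, e2] at h
  refine ⟨?_, ?_, ?_⟩
  · intro Ψ
    apply Subtype.ext
    funext 𝔶
    rw [hqh]
    have hfun : (qinv Ψ).1 = fun 𝔵 => Ψ.1 (𝒯.map (Quot.mk r) 𝔵) := funext (hqinv Ψ)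
    rw [hfun]
    exact 𝒯.aux_hatMapRel_section qs (Quot.mk r) (fun z => z.out)
      (fun z => Quot.out_eq z) Ψ.1 Ψ.2 𝔶
  · intro Ψ
    apply Subtype.ext
    funext 𝔵
    rw [hp1h]
    have hfun : (p1inv Ψ).1 = fun 𝔴 => Ψ.1 (𝒯.map (fun p => p.1.1) 𝔴) :=
      funext (hp1inv Ψ)
    rw [hfun]
    exact 𝒯.aux_hatMapRel_section a (fun p : {p : X × X // r p.1 p.2} => p.1.1)
      (fun x => (⟨(x, x), hr.refl x⟩ : {p : X × X // r p.1 p.2}))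
      (fun x => rfl) Ψ.1 Ψ.2 𝔵
  · intro Ψ
    apply Subtype.ext
    funext 𝔵
    rw [hqinv, hqh, hp2h]
    have hfun : (p1inv Ψ).1 = fun 𝔴 => Ψ.1 (𝒯.map (fun p => p.1.1) 𝔴) :=
      funext (hp1inv Ψ)
    rw [hfun]
    apply le_antisymm
    · -- the hard direction
      refine 𝒯.aux_kleisli_le _ _ fun 𝔜 𝔵' => ?_
      obtain ⟨𝔛, h𝔛1, h𝔛2⟩ := 𝒯.m_bc (Quot.mk r) 𝔜.1 𝔵 𝔜.2
      refine le_trans (le_of_eq (𝒯.aux_tens_iSup_left _ _)) (iSup_le fun 𝔚 => ?_)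
      -- pair up `𝔚` with `𝔛`
      have hPB : 𝒯.map Prod.fst 𝔚.1 = 𝒯.map (𝒯.map (Quot.mk r)) 𝔛 := by
        rw [𝔚.2.1, h𝔛1]
      obtain ⟨𝔓, hP1, hP2⟩ := 𝒯.map_bc Prod.fst (𝒯.map (Quot.mk r)) 𝔚.1 𝔛 hPB
      have hval : 𝒯.map (fun p : T (Quot r) × X =>
            modCostar qs (Quot.mk r) p.1 p.2) 𝔚.1
          = 𝒯.map (fun t : {p : (T (Quot r) × X) × T X //
                p.1.1 = 𝒯.map (Quot.mk r) p.2} =>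
              qs.rel (𝒯.map (Quot.mk r) t.1.2) (Quot.mk r t.1.1.2)) 𝔓 := by
        rw [← hP1, ← 𝒯.map_comp]
        refine 𝒯.aux_map_congr (fun t => ?_) 𝔓
        show qs.rel t.1.1.1 (Quot.mk r t.1.1.2)
            = qs.rel (𝒯.map (Quot.mk r) t.1.2) (Quot.mk r t.1.1.2)
        rw [t.2]
      have hpt : ∀ t : {p : (T (Quot r) × X) × T X // p.1.1 = 𝒯.map (Quot.mk r) p.2},
          (⨆ c : {c : {c : (T X × X) × {p : (T (Quot r) × X) × T X //
                  p.1.1 = 𝒯.map (Quot.mk r) p.2} //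
                𝒯.map (Quot.mk r) c.1.1 = 𝒯.map (Quot.mk r) c.2.1.2 ∧
                  Quot.mk r c.1.2 = Quot.mk r c.2.1.1.2} // c.1.2 = t},
            a.rel c.1.1.1.1 c.1.1.1.2)
          = qs.rel (𝒯.map (Quot.mk r) t.1.2) (Quot.mk r t.1.1.2) := by
        intro t
        rw [hqs]
        apply le_antisymm
        · refine iSup_le fun c => ?_
          have hc1 : 𝒯.map (Quot.mk r) c.1.1.1.1 = 𝒯.map (Quot.mk r) t.1.2 := by
            have h := c.1.2.1
            rwa [c.2] at h
          have hc2 : Quot.mk r c.1.1.1.2 = Quot.mk r t.1.1.2 := by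
            have h := c.1.2.2
            rwa [c.2] at h
          exact le_iSup_of_le ⟨c.1.1.1.1, hc1⟩ (le_iSup_of_le ⟨c.1.1.1.2, hc2⟩ le_rfl)
        · refine iSup_le fun 𝔷 => iSup_le fun x' => ?_
          exact le_iSup_of_le ⟨⟨⟨(𝔷.1, x'.1), t⟩, ⟨𝔷.2, x'.2⟩⟩, rfl⟩ le_rfl
      have hnat := 𝒯.xi_nat
        (fun x : {c : (T X × X) × {p : (T (Quot r) × X) × T X //
              p.1.1 = 𝒯.map (Quot.mk r) p.2} //
            𝒯.map (Quot.mk r) c.1.1 = 𝒯.map (Quot.mk r) c.2.1.2 ∧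
              Quot.mk r c.1.2 = Quot.mk r c.2.1.1.2} => x.1.2)
        (fun x : {c : (T X × X) × {p : (T (Quot r) × X) × T X //
              p.1.1 = 𝒯.map (Quot.mk r) p.2} //
            𝒯.map (Quot.mk r) c.1.1 = 𝒯.map (Quot.mk r) c.2.1.2 ∧
              Quot.mk r c.1.2 = Quot.mk r c.2.1.1.2} => a.rel x.1.1.1 x.1.1.2) 𝔓
      have hval2 : 𝒯.xi (𝒯.map (fun p : T (Quot r) × X =>
            modCostar qs (Quot.mk r) p.1 p.2) 𝔚.1)
          = ⨆ ℭ : {ℭ : T {c : (T X × X) × {p : (T (Quot r) × X) × T X //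
                  p.1.1 = 𝒯.map (Quot.mk r) p.2} //
                𝒯.map (Quot.mk r) c.1.1 = 𝒯.map (Quot.mk r) c.2.1.2 ∧
                  Quot.mk r c.1.2 = Quot.mk r c.2.1.1.2} //
              𝒯.map (fun x => x.1.2) ℭ = 𝔓},
            𝒯.xi (𝒯.map (fun x => a.rel x.1.1.1 x.1.1.2) ℭ.1) := by
        rw [hval, 𝒯.aux_map_congr (fun t => (hpt t).symm) 𝔓, ← hnat]
      rw [hval2, 𝒯.aux_tens_iSup_left]
      refine iSup_le fun ℭ => ?_
      obtain ⟨𝔴, h𝔴⟩ : ∃ 𝔴, 𝔴 = 𝒯.map (fun x : {c : (T X × X) × {p : (T (Quot r) × X) × T X //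
              p.1.1 = 𝒯.map (Quot.mk r) p.2} //
            𝒯.map (Quot.mk r) c.1.1 = 𝒯.map (Quot.mk r) c.2.1.2 ∧
              Quot.mk r c.1.2 = Quot.mk r c.2.1.1.2} =>
          (⟨(x.1.2.1.1.2, (g₁ x.1.1.2).1.2),
            hr.trans (hr.symm (key x.2.2)) (hrelA x.1.1.2)⟩ :
              {p : X × X // r p.1 p.2})) ℭ.1 := ⟨_, rfl⟩
      have s3 : 𝒯.map (fun x : {c : (T X × X) × {p : (T (Quot r) × X) × T X //
              p.1.1 = 𝒯.map (Quot.mk r) p.2} //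
            𝒯.map (Quot.mk r) c.1.1 = 𝒯.map (Quot.mk r) c.2.1.2 ∧
              Quot.mk r c.1.2 = Quot.mk r c.2.1.1.2} => x.1.2.1.2) ℭ.1 = 𝔛 := by
        have h := congrArg (𝒯.map (fun t : {p : (T (Quot r) × X) × T X //
            p.1.1 = 𝒯.map (Quot.mk r) p.2} => t.1.2)) ℭ.2
        rw [← 𝒯.map_comp] at h
        exact (𝒯.aux_map_congr (fun x => rfl) ℭ.1).trans (h.trans hP2)
      have s1 : 𝒯.map (fun x : {c : (T X × X) × {p : (T (Quot r) × X) × T X //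
              p.1.1 = 𝒯.map (Quot.mk r) p.2} //
            𝒯.map (Quot.mk r) c.1.1 = 𝒯.map (Quot.mk r) c.2.1.2 ∧
              Quot.mk r c.1.2 = Quot.mk r c.2.1.1.2} => x.1.2.1.1.2) ℭ.1
          = 𝒯.map (fun t : {p : (T (Quot r) × X) × T X //
              p.1.1 = 𝒯.map (Quot.mk r) p.2} => t.1.1.2) 𝔓 := by
        have h := congrArg (𝒯.map (fun t : {p : (T (Quot r) × X) × T X //
            p.1.1 = 𝒯.map (Quot.mk r) p.2} => t.1.1.2)) ℭ.2
        rw [← 𝒯.map_comp] at h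
        exact (𝒯.aux_map_congr (fun x => rfl) ℭ.1).trans h
      have s2 : 𝒯.map (fun t : {p : (T (Quot r) × X) × T X //
            p.1.1 = 𝒯.map (Quot.mk r) p.2} => t.1.1.2) 𝔓 = 𝔵' := by
        rw [← 𝔚.2.2, ← hP1, ← 𝒯.map_comp]
        exact 𝒯.aux_map_congr (fun t => rfl) 𝔓
      have f1 : 𝒯.map (fun p : {p : X × X // r p.1 p.2} => p.1.1) 𝔴 = 𝔵' := by
        rw [h𝔴, ← 𝒯.map_comp]
        exact (𝒯.aux_map_congr
          (g := fun x : {c : (T X × X) × {p : (T (Quot r) × X) × T X //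
              p.1.1 = 𝒯.map (Quot.mk r) p.2} //
            𝒯.map (Quot.mk r) c.1.1 = 𝒯.map (Quot.mk r) c.2.1.2 ∧
              Quot.mk r c.1.2 = Quot.mk r c.2.1.1.2} => x.1.2.1.1.2)
          (fun x => rfl) ℭ.1).trans (s1.trans s2)
      have hTxi : 𝒯.xi (𝒯.map (fun x : {c : (T X × X) × {p : (T (Quot r) × X) × T X //
              p.1.1 = 𝒯.map (Quot.mk r) p.2} //
            𝒯.map (Quot.mk r) c.1.1 = 𝒯.map (Quot.mk r) c.2.1.2 ∧
              Quot.mk r c.1.2 = Quot.mk r c.2.1.1.2} => a.rel x.1.1.1 x.1.1.2) ℭ.1)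
          ≤ 𝒯.Txi (modCostar a (fun p : {p : X × X // r p.1 p.2} => p.1.2)) 𝔛 𝔴 := by
        refine le_trans
          (𝒯.xi_mono _ _ (fun x => lemB x.1.1.1 x.1.2.1.2 x.2.1 x.1.1.2) ℭ.1) ?_
        refine 𝒯.aux_le_Txi (modCostar a (fun p : {p : X × X // r p.1 p.2} => p.1.2))
          (fun x : {c : (T X × X) × {p : (T (Quot r) × X) × T X //
              p.1.1 = 𝒯.map (Quot.mk r) p.2} //
            𝒯.map (Quot.mk r) c.1.1 = 𝒯.map (Quot.mk r) c.2.1.2 ∧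
              Quot.mk r c.1.2 = Quot.mk r c.2.1.1.2} =>
          (x.1.2.1.2, (⟨(x.1.2.1.1.2, (g₁ x.1.1.2).1.2),
            hr.trans (hr.symm (key x.2.2)) (hrelA x.1.1.2)⟩ :
              {p : X × X // r p.1 p.2}))) ℭ.1 s3 ?_
        rw [h𝔴]
      calc 𝒯.tens (𝒯.xi (𝒯.map (fun x : {c : (T X × X) × {p : (T (Quot r) × X) × T X //
              p.1.1 = 𝒯.map (Quot.mk r) p.2} //
            𝒯.map (Quot.mk r) c.1.1 = 𝒯.map (Quot.mk r) c.2.1.2 ∧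
              Quot.mk r c.1.2 = Quot.mk r c.2.1.1.2} =>
            a.rel x.1.1.1 x.1.1.2) ℭ.1)) (Ψ.1 𝔵')
          ≤ 𝒯.tens (𝒯.Txi (modCostar a (fun p : {p : X × X // r p.1 p.2} => p.1.2)) 𝔛 𝔴)
            (Ψ.1 (𝒯.map (fun p : {p : X × X // r p.1 p.2} => p.1.1) 𝔴)) := by
            rw [f1]; exact 𝒯.aux_tens_mono_left hTxi _
        _ ≤ _ := 𝒯.aux_le_kleisli
            (fun 𝔴' (_ : PUnit.{u+1}) => Ψ.1 (𝒯.map (fun p : {p : X × X // r p.1 p.2} => p.1.1) 𝔴'))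
            (modCostar a (fun p : {p : X × X // r p.1 p.2} => p.1.2)) 𝔛 h𝔛2 𝔴
    · -- the easy direction
      refine 𝒯.aux_kleisli_le _ _ fun 𝔛 𝔴 => ?_
      have hm : 𝒯.m (𝒯.map (𝒯.map (Quot.mk r)) 𝔛.1) = 𝒯.map (Quot.mk r) 𝔵 := by
        rw [← 𝒯.m_nat, 𝔛.2]
      refine le_trans ?_ (𝒯.aux_le_kleisli _ (modCostar qs (Quot.mk r))
        (𝒯.map (𝒯.map (Quot.mk r)) 𝔛.1) hm (𝒯.map (fun p => p.1.1) 𝔴))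
      refine 𝒯.aux_tens_mono_left ?_ _
      refine 𝒯.aux_Txi_le _ fun 𝔘 => ?_
      refine le_trans (𝒯.xi_mono _ _ ?_ 𝔘.1) (𝒯.aux_le_Txi (modCostar qs (Quot.mk r))
        (fun u : T X × {p : X × X // r p.1 p.2} =>
          (𝒯.map (Quot.mk r) u.1, u.2.1.1)) 𝔘.1 ?_ ?_)
      · intro u
        show a.rel u.1 (u.2.1.2) ≤ qs.rel (𝒯.map (Quot.mk r) u.1) (Quot.mk r u.2.1.1)
        rw [hqs]
        exact le_iSup_of_le ⟨u.1, rfl⟩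
          (le_iSup_of_le ⟨u.2.1.2, Quot.sound (hr.symm u.2.2)⟩ le_rfl)
      · rw [show (fun u : T X × {p : X × X // r p.1 p.2} => 𝒯.map (Quot.mk r) u.1)
            = 𝒯.map (Quot.mk r) ∘ Prod.fst from rfl, 𝒯.map_comp, 𝔘.2.1]
      · rw [show (fun u : T X × {p : X × X // r p.1 p.2} => u.2.1.1)
            = (fun p : {p : X × X // r p.1 p.2} => p.1.1) ∘ Prod.snd from rfl,
          𝒯.map_comp, 𝔘.2.2]

end TopTheory

end Paper
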